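/- Let $u$ be $C^1$ on a neighborhood of the circle of radius $\epsilon > 0$ centered at the origin in $\mathbb{R}^2$, and define on the disk $\mathbb{B}_\epsilon$ the function $v(r\cos\varphi, r\sin\varphi) := \frac{r}{\epsilon}\tilde u(\epsilon,\varphi)$ with $\tilde u(r,\varphi) = u(r\cos\varphi, r\sin\varphi)$. Then $\int_{\mathbb{B}_\epsilon} |\nabla v|^2\, dx\, dy \le 4\int_0^{2\pi} |\tilde u(\epsilon,\varphi)|^2\, d\varphi + 4\int_0^{2\pi} \left|\frac{\partial \tilde u}{\partial \varphi}(\epsilon,\varphi)\right|^2 d\varphi$. -/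

import Mathlib

open MeasureTheory Real Set

noncomputable def V13 (ε : ℝ) (u : ℝ × ℝ → ℂ) (z : ℝ × ℝ) : ℂ :=
  (ε⁻¹ * Real.sqrt (z.1*z.1 + z.2*z.2)) • u ((ε * (Real.sqrt (z.1*z.1 + z.2*z.2))⁻¹) • z)

lemma stmt13_aux (c s e : ℝ) (hcs : c^2 + s^2 = 1) (he : e ≠ 0) (a b : ℂ) :
    ‖(c/e) • a + (-(s/e)) • b‖^2 + ‖(s/e) • a + (c/e) • b‖^2 = (‖a‖^2 + ‖b‖^2)/e^2 := by
  simp only [Complex.sq_norm, Complex.normSq_apply, Complex.real_smul,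
    Complex.add_re, Complex.add_im, Complex.mul_re, Complex.mul_im, Complex.ofReal_re,
    Complex.ofReal_im, Complex.neg_re, Complex.neg_im, Complex.ofReal_neg]
  field_simp
  linear_combination (a.re^2 + a.im^2 + b.re^2 + b.im^2) * hcs

lemma V13_eq (ε : ℝ) (hε : 0 < ε) (u v : ℝ × ℝ → ℂ)
    (hv : ∀ r ∈ Set.Icc (0:ℝ) ε, ∀ φ : ℝ,
      v (r * Real.cos φ, r * Real.sin φ) =
        ((r / ε : ℝ) : ℂ) * u (ε * Real.cos φ, ε * Real.sin φ))
    (z : ℝ × ℝ) (hz : z ∈ {z : ℝ × ℝ | z.1 ^ 2 + z.2 ^ 2 < ε ^ 2} \ {0}) :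
    v z = V13 ε u z := by
  obtain ⟨hzD, hz0⟩ := hz
  have hz0' : z ≠ 0 := hz0
  set w : ℂ := ⟨z.1, z.2⟩ with hw
  have hwne : w ≠ 0 := by
    intro hc
    apply hz0'
    have h1 : w.re = 0 := by rw [hc]; rfl
    have h2 : w.im = 0 := by rw [hc]; rfl
    exact Prod.ext h1 h2
  have habs : ‖w‖ = Real.sqrt (z.1*z.1 + z.2*z.2) := by
    rw [Complex.norm_def]
    congr 1
  set r : ℝ := Real.sqrt (z.1*z.1 + z.2*z.2) with hrdef
  have hq0 : 0 < z.1*z.1 + z.2*z.2 := by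
    rcases Prod.ext_iff.not.mp hz0' with h
    have : z.1 ≠ 0 ∨ z.2 ≠ 0 := by
      by_contra hc
      push_neg at hc
      exact hz0' (Prod.ext hc.1 hc.2)
    rcases this with h1 | h2
    · nlinarith [mul_self_nonneg z.2, mul_self_pos.mpr h1]
    · nlinarith [mul_self_nonneg z.1, mul_self_pos.mpr h2]
  have hr0 : 0 < r := Real.sqrt_pos.mpr hq0
  have hrε : r < ε := by
    rw [hrdef, Real.sqrt_lt' hε]
    simpa [pow_two] using hzD
  set θ : ℝ := Complex.arg w with hθ
  have hcos : Real.cos θ = z.1 / r := by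
    rw [hθ, Complex.cos_arg hwne, habs]
  have hsin : Real.sin θ = z.2 / r := by
    rw [hθ, Complex.sin_arg, habs]
  have hz1 : z.1 = r * Real.cos θ := by rw [hcos]; field_simp
  have hz2 : z.2 = r * Real.sin θ := by rw [hsin]; field_simp
  have hzeq : z = (r * Real.cos θ, r * Real.sin θ) := Prod.ext hz1 hz2
  have h1 : v z = ((r / ε : ℝ) : ℂ) * u (ε * Real.cos θ, ε * Real.sin θ) := by
    rw [hzeq] at *
    exact hv r ⟨hr0.le, hrε.le⟩ θ
  rw [h1]
  unfold V13
  rw [← hrdef]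
  have hm : (ε * r⁻¹) • z = (ε * Real.cos θ, ε * Real.sin θ) := by
    rw [hzeq]
    ext <;> simp <;> field_simp <;> ring
  rw [hm, Complex.real_smul, ← div_eq_inv_mul]

lemma V13_deriv_x (ε : ℝ) (hε : 0 < ε) (u : ℝ × ℝ → ℂ) (r θ : ℝ) (hr : 0 < r)
    (L : (ℝ × ℝ) →L[ℝ] ℂ)
    (hu' : HasFDerivAt u L ((ε * Real.cos θ, ε * Real.sin θ) : ℝ × ℝ)) :
    HasDerivAt (fun t : ℝ => V13 ε u (r * Real.cos θ + t, r * Real.sin θ))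
      ((Real.cos θ / ε) • u (ε * Real.cos θ, ε * Real.sin θ) +
        (-(Real.sin θ / ε)) • L (-(ε * Real.sin θ), ε * Real.cos θ)) 0 := by
  set c := Real.cos θ
  set s := Real.sin θ
  have hcs : s^2 + c^2 = 1 := Real.sin_sq_add_cos_sq θ
  have hrne : r ≠ 0 := hr.ne'
  have hεne : ε ≠ 0 := hε.ne'
  set z1 : ℝ := r * c with hz1
  set z2 : ℝ := r * s with hz2
  set q1 : ℝ → ℝ := fun t => (z1 + t)*(z1 + t) + z2*z2 with hq1def
  have hq10 : q1 0 = r * r := by simp only [hq1def, add_zero, hz1, hz2]; linear_combination (r*r) * hcs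
  have hsr : Real.sqrt (q1 0) = r := by rw [hq10, Real.sqrt_mul_self hr.le]
  have h11 : HasDerivAt (fun t : ℝ => z1 + t) 1 0 := (hasDerivAt_id 0).const_add z1
  have hq1 : HasDerivAt q1 (2*z1) 0 := by
    have := (h11.mul h11).add_const (z2*z2)
    refine this.congr_deriv (Eq.symm ?_)
    ring
  have hs1 : HasDerivAt (fun t => Real.sqrt (q1 t)) c 0 := by
    have h0 : q1 0 ≠ 0 := by rw [hq10]; positivity
    have := (Real.hasDerivAt_sqrt h0).comp 0 hq1
    refine this.congr_deriv (Eq.symm ?_)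
    rw [hsr, hz1]
    field_simp
  have hinv1 : HasDerivAt (fun t => ε * (Real.sqrt (q1 t))⁻¹) (-(ε*c/(r*r))) 0 := by
    have hrne' : Real.sqrt (q1 0) ≠ 0 := by rw [hsr]; exact hrne
    have := ((hasDerivAt_inv hrne').comp 0 hs1).const_mul ε
    refine this.congr_deriv (Eq.symm ?_)
    rw [hsr]
    field_simp
  have hm1 : HasDerivAt (fun t => ((ε * (Real.sqrt (q1 t))⁻¹) • ((z1 + t, z2) : ℝ × ℝ)))
      ((-(s)/r) • ((-(ε * s), ε * c) : ℝ × ℝ)) 0 := by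
    have hA := (hinv1.mul h11).prodMk (hinv1.mul_const z2)
    have heq : ((-(ε*c/(r*r))) * (z1 + 0) + (ε * (Real.sqrt (q1 0))⁻¹) * 1,
        (-(ε*c/(r*r))) * z2) = ((-(s)/r) • ((-(ε * s), ε * c) : ℝ × ℝ)) := by
      rw [hsr, hz1, hz2]
      simp only [Prod.smul_mk, smul_eq_mul, Prod.mk.injEq]
      constructor
      · field_simp
        linear_combination (-r) * hcs
      · field_simp
    rw [heq] at hA
    exact hA
  have hm0 : ((ε * (Real.sqrt (q1 0))⁻¹) • ((z1 + 0, z2) : ℝ × ℝ)) = (ε * c, ε * s) := by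
    rw [hsr, hz1, hz2]
    simp only [add_zero, Prod.smul_mk, smul_eq_mul, Prod.mk.injEq]
    constructor <;> field_simp <;> ring
  have hu'' : HasFDerivAt u L ((fun t : ℝ => ((ε * (Real.sqrt (q1 t))⁻¹) • ((z1 + t, z2) : ℝ × ℝ))) 0) := by
    simpa only [hm0] using hu'
  have hcomp : HasDerivAt (fun t => u ((ε * (Real.sqrt (q1 t))⁻¹) • ((z1 + t, z2) : ℝ × ℝ)))
      (L ((-(s)/r) • ((-(ε * s), ε * c) : ℝ × ℝ))) 0 := hu''.comp_hasDerivAt 0 hm1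
  have hsc : HasDerivAt (fun t => ε⁻¹ * Real.sqrt (q1 t)) (ε⁻¹ * c) 0 := hs1.const_mul ε⁻¹
  have hG := hsc.smul hcomp
  refine hG.congr_deriv (Eq.symm ?_)
  rw [hm0, hsr, L.map_smul, smul_smul]
  have h1 : ε⁻¹ * r * (-s/r) = -(s/ε) := by field_simp
  have h2 : ε⁻¹ * c = c/ε := by field_simp
  rw [h1, h2, add_comm]

lemma V13_deriv_y (ε : ℝ) (hε : 0 < ε) (u : ℝ × ℝ → ℂ) (r θ : ℝ) (hr : 0 < r)
    (L : (ℝ × ℝ) →L[ℝ] ℂ)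
    (hu' : HasFDerivAt u L ((ε * Real.cos θ, ε * Real.sin θ) : ℝ × ℝ)) :
    HasDerivAt (fun t : ℝ => V13 ε u (r * Real.cos θ, r * Real.sin θ + t))
      ((Real.sin θ / ε) • u (ε * Real.cos θ, ε * Real.sin θ) +
        (Real.cos θ / ε) • L (-(ε * Real.sin θ), ε * Real.cos θ)) 0 := by
  set c := Real.cos θ
  set s := Real.sin θ
  have hcs : s^2 + c^2 = 1 := Real.sin_sq_add_cos_sq θ
  have hrne : r ≠ 0 := hr.ne'
  have hεne : ε ≠ 0 := hε.ne'
  set z1 : ℝ := r * c with hz1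
  set z2 : ℝ := r * s with hz2
  set q1 : ℝ → ℝ := fun t => z1*z1 + (z2 + t)*(z2 + t) with hq1def
  have hq10 : q1 0 = r * r := by simp only [hq1def, add_zero, hz1, hz2]; linear_combination (r*r) * hcs
  have hsr : Real.sqrt (q1 0) = r := by rw [hq10, Real.sqrt_mul_self hr.le]
  have h11 : HasDerivAt (fun t : ℝ => z2 + t) 1 0 := (hasDerivAt_id 0).const_add z2
  have hq1 : HasDerivAt q1 (2*z2) 0 := by
    have := ((h11.mul h11).const_add (z1*z1))
    refine this.congr_deriv (Eq.symm ?_)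
    ring
  have hs1 : HasDerivAt (fun t => Real.sqrt (q1 t)) s 0 := by
    have h0 : q1 0 ≠ 0 := by rw [hq10]; positivity
    have := (Real.hasDerivAt_sqrt h0).comp 0 hq1
    refine this.congr_deriv (Eq.symm ?_)
    rw [hsr, hz2]
    field_simp
  have hinv1 : HasDerivAt (fun t => ε * (Real.sqrt (q1 t))⁻¹) (-(ε*s/(r*r))) 0 := by
    have hrne' : Real.sqrt (q1 0) ≠ 0 := by rw [hsr]; exact hrne
    have := ((hasDerivAt_inv hrne').comp 0 hs1).const_mul ε
    refine this.congr_deriv (Eq.symm ?_)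
    rw [hsr]
    field_simp
  have hm1 : HasDerivAt (fun t => ((ε * (Real.sqrt (q1 t))⁻¹) • ((z1, z2 + t) : ℝ × ℝ)))
      ((c/r) • ((-(ε * s), ε * c) : ℝ × ℝ)) 0 := by
    have hA := (hinv1.mul_const z1).prodMk (hinv1.mul h11)
    have heq : ((-(ε*s/(r*r))) * z1,
        (-(ε*s/(r*r))) * (z2 + 0) + (ε * (Real.sqrt (q1 0))⁻¹) * 1)
        = ((c/r) • ((-(ε * s), ε * c) : ℝ × ℝ)) := by
      rw [hsr, hz1, hz2]
      simp only [Prod.smul_mk, smul_eq_mul, Prod.mk.injEq]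
      constructor
      · field_simp
      · field_simp
        linear_combination (-r) * hcs
    rw [heq] at hA
    exact hA
  have hm0 : ((ε * (Real.sqrt (q1 0))⁻¹) • ((z1, z2 + 0) : ℝ × ℝ)) = (ε * c, ε * s) := by
    rw [hsr, hz1, hz2]
    simp only [add_zero, Prod.smul_mk, smul_eq_mul, Prod.mk.injEq]
    constructor <;> field_simp <;> ring
  have hu'' : HasFDerivAt u L ((fun t : ℝ => ((ε * (Real.sqrt (q1 t))⁻¹) • ((z1, z2 + t) : ℝ × ℝ))) 0) := by
    simpa only [hm0] using hu'
  have hcomp : HasDerivAt (fun t => u ((ε * (Real.sqrt (q1 t))⁻¹) • ((z1, z2 + t) : ℝ × ℝ)))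
      (L ((c/r) • ((-(ε * s), ε * c) : ℝ × ℝ))) 0 := hu''.comp_hasDerivAt 0 hm1
  have hsc : HasDerivAt (fun t => ε⁻¹ * Real.sqrt (q1 t)) (ε⁻¹ * s) 0 := hs1.const_mul ε⁻¹
  have hG := hsc.smul hcomp
  refine hG.congr_deriv (Eq.symm ?_)
  rw [hm0, hsr, L.map_smul, smul_smul]
  have h1 : ε⁻¹ * r * (c/r) = c/ε := by field_simp
  have h2 : ε⁻¹ * s = s/ε := by field_simp
  rw [h1, h2, add_comm]

/-- gradient estimate for the radial extension `J₁'`: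
`∫_{B_ε} |∇v|² ≤ 4 ∫₀^{2π} |ũ(ε,φ)|² dφ + 4 ∫₀^{2π} |∂_φ ũ(ε,φ)|² dφ`. -/
theorem stmt13 (ε : ℝ) (hε : 0 < ε) (u v : ℝ × ℝ → ℂ)
    (U : Set (ℝ × ℝ)) (hU : IsOpen U)
    (hcirc : {z : ℝ × ℝ | z.1 ^ 2 + z.2 ^ 2 = ε ^ 2} ⊆ U)
    (hu : ContDiffOn ℝ 1 u U)
    (hv : ∀ r ∈ Set.Icc (0:ℝ) ε, ∀ φ : ℝ,
      v (r * Real.cos φ, r * Real.sin φ) =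
        ((r / ε : ℝ) : ℂ) * u (ε * Real.cos φ, ε * Real.sin φ))
    (hvdiff : DifferentiableOn ℝ v ({z : ℝ × ℝ | z.1 ^ 2 + z.2 ^ 2 < ε ^ 2} \ {0})) :
    (∫ z in {z : ℝ × ℝ | z.1 ^ 2 + z.2 ^ 2 < ε ^ 2},
        (‖fderiv ℝ v z (1, 0)‖ ^ 2 + ‖fderiv ℝ v z (0, 1)‖ ^ 2)) ≤
      4 * (∫ φ in (0:ℝ)..(2 * Real.pi), ‖u (ε * Real.cos φ, ε * Real.sin φ)‖ ^ 2) +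
        4 * ∫ φ in (0:ℝ)..(2 * Real.pi),
          ‖deriv (fun θ : ℝ => u (ε * Real.cos θ, ε * Real.sin θ)) φ‖ ^ 2 := by
  have hεne : ε ≠ 0 := hε.ne'
  set D : Set (ℝ × ℝ) := {z : ℝ × ℝ | z.1 ^ 2 + z.2 ^ 2 < ε ^ 2} with hD
  set g : ℝ → ℂ := fun θ : ℝ => u (ε * Real.cos θ, ε * Real.sin θ) with hgdef
  have hpU : ∀ θ : ℝ, ((ε * Real.cos θ, ε * Real.sin θ) : ℝ × ℝ) ∈ U := by
    intro θ
    apply hcirc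
    show (ε * Real.cos θ)^2 + (ε * Real.sin θ)^2 = ε^2
    linear_combination ε^2 * Real.sin_sq_add_cos_sq θ
  have hud : ∀ θ : ℝ, HasFDerivAt u (fderiv ℝ u (ε * Real.cos θ, ε * Real.sin θ))
      (ε * Real.cos θ, ε * Real.sin θ) := fun θ =>
    ((hu.contDiffAt (hU.mem_nhds (hpU θ))).differentiableAt one_ne_zero).hasFDerivAt
  set b : ℝ → ℂ := fun θ =>
    fderiv ℝ u (ε * Real.cos θ, ε * Real.sin θ) (-(ε * Real.sin θ), ε * Real.cos θ) with hbdef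
  have hg : ∀ θ : ℝ, HasDerivAt g (b θ) θ := by
    intro θ
    have h1 : HasDerivAt (fun φ : ℝ => ε * Real.cos φ) (ε * -Real.sin θ) θ :=
      (Real.hasDerivAt_cos θ).const_mul ε
    have h2 : HasDerivAt (fun φ : ℝ => ε * Real.sin φ) (ε * Real.cos θ) θ :=
      (Real.hasDerivAt_sin θ).const_mul ε
    have hcurve := h1.prodMk h2
    rw [mul_neg ε (Real.sin θ)] at hcurve
    exact (hud θ).comp_hasDerivAt θ hcurve
  have hderiv : deriv g = b := funext fun θ => (hg θ).deriv
  have hcont_pt : Continuous (fun θ : ℝ => ((ε * Real.cos θ, ε * Real.sin θ) : ℝ × ℝ)) := by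
    fun_prop
  have hgc : Continuous g := hu.continuousOn.comp_continuous hcont_pt hpU
  have hfc : ContinuousOn (fderiv ℝ u) U := hu.continuousOn_fderiv_of_isOpen hU le_rfl
  have hbc : Continuous b := by
    apply Continuous.clm_apply (hfc.comp_continuous hcont_pt hpU)
    fun_prop
  have hDopen : IsOpen D := by
    have : D = (fun z : ℝ × ℝ => z.1^2 + z.2^2) ⁻¹' (Iio (ε^2)) := rfl
    rw [this]
    exact IsOpen.preimage (by fun_prop) isOpen_Iio
  have hopen : IsOpen (D \ {0}) := hDopen.sdiff isClosed_singleton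
  have key : ∀ r ∈ Ioo (0:ℝ) ε, ∀ θ : ℝ,
      ‖fderiv ℝ v (r * Real.cos θ, r * Real.sin θ) (1, 0)‖ ^ 2 +
        ‖fderiv ℝ v (r * Real.cos θ, r * Real.sin θ) (0, 1)‖ ^ 2
        = (‖g θ‖^2 + ‖b θ‖^2) / ε^2 := by
    rintro r ⟨hr0, hrε⟩ θ
    have hcs : Real.sin θ^2 + Real.cos θ^2 = 1 := Real.sin_sq_add_cos_sq θ
    set z : ℝ × ℝ := (r * Real.cos θ, r * Real.sin θ) with hzdef
    have hzq : z.1^2 + z.2^2 = r^2 := by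
      show (r * Real.cos θ)^2 + (r * Real.sin θ)^2 = r^2
      linear_combination r^2 * hcs
    have hzD : z ∈ D := by
      show z.1^2 + z.2^2 < ε^2
      rw [hzq]
      nlinarith
    have hz0 : z ≠ 0 := by
      intro h0
      have h1 : z.1^2 + z.2^2 = 0 := by rw [h0]; norm_num
      rw [hzq] at h1
      exact (pow_ne_zero 2 hr0.ne') h1
    have hmem : z ∈ D \ {0} := ⟨hzD, hz0⟩
    have hdz : DifferentiableAt ℝ v z := hvdiff.differentiableAt (hopen.mem_nhds hmem)
    -- x direction
    have hlinex : HasDerivAt (fun t : ℝ => ((r * Real.cos θ + t, r * Real.sin θ) : ℝ × ℝ))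
        ((1,0) : ℝ × ℝ) 0 :=
      ((hasDerivAt_id 0).const_add (r * Real.cos θ)).prodMk (hasDerivAt_const 0 (r * Real.sin θ))
    have hpt_x : ((r * Real.cos θ + (0:ℝ), r * Real.sin θ) : ℝ × ℝ) = z := by rw [add_zero]
    have hvdx : HasFDerivAt v (fderiv ℝ v z)
        ((fun t : ℝ => ((r * Real.cos θ + t, r * Real.sin θ) : ℝ × ℝ)) 0) := by
      rw [show ((fun t : ℝ => ((r * Real.cos θ + t, r * Real.sin θ) : ℝ × ℝ)) 0) = z from hpt_x]
      exact hdz.hasFDerivAt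
    have hvx : HasDerivAt (fun t : ℝ => v (r * Real.cos θ + t, r * Real.sin θ))
        (fderiv ℝ v z (1,0)) 0 := hvdx.comp_hasDerivAt 0 hlinex
    have hEqx : (fun t : ℝ => V13 ε u (r * Real.cos θ + t, r * Real.sin θ)) =ᶠ[nhds (0:ℝ)]
        (fun t : ℝ => v (r * Real.cos θ + t, r * Real.sin θ)) := by
      have hco : ContinuousAt (fun t : ℝ => ((r * Real.cos θ + t, r * Real.sin θ) : ℝ × ℝ)) 0 := by
        fun_prop
      have hnb : (D \ {0}) ∈ nhds ((r * Real.cos θ + (0:ℝ), r * Real.sin θ) : ℝ × ℝ) := by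
        rw [hpt_x]; exact hopen.mem_nhds hmem
      filter_upwards [hco.preimage_mem_nhds hnb] with t ht
      exact (V13_eq ε hε u v hv _ ht).symm
    have hvx' : HasDerivAt (fun t : ℝ => V13 ε u (r * Real.cos θ + t, r * Real.sin θ))
        (fderiv ℝ v z (1,0)) 0 := hvx.congr_of_eventuallyEq hEqx
    have hx := hvx'.unique (V13_deriv_x ε hε u r θ hr0 _ (hud θ))
    -- y direction
    have hliney : HasDerivAt (fun t : ℝ => ((r * Real.cos θ, r * Real.sin θ + t) : ℝ × ℝ))
        ((0,1) : ℝ × ℝ) 0 :=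
      (hasDerivAt_const 0 (r * Real.cos θ)).prodMk ((hasDerivAt_id 0).const_add (r * Real.sin θ))
    have hpt_y : ((r * Real.cos θ, r * Real.sin θ + (0:ℝ)) : ℝ × ℝ) = z := by rw [add_zero]
    have hvdy : HasFDerivAt v (fderiv ℝ v z)
        ((fun t : ℝ => ((r * Real.cos θ, r * Real.sin θ + t) : ℝ × ℝ)) 0) := by
      rw [show ((fun t : ℝ => ((r * Real.cos θ, r * Real.sin θ + t) : ℝ × ℝ)) 0) = z from hpt_y]
      exact hdz.hasFDerivAt
    have hvy : HasDerivAt (fun t : ℝ => v (r * Real.cos θ, r * Real.sin θ + t))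
        (fderiv ℝ v z (0,1)) 0 := hvdy.comp_hasDerivAt 0 hliney
    have hEqy : (fun t : ℝ => V13 ε u (r * Real.cos θ, r * Real.sin θ + t)) =ᶠ[nhds (0:ℝ)]
        (fun t : ℝ => v (r * Real.cos θ, r * Real.sin θ + t)) := by
      have hco : ContinuousAt (fun t : ℝ => ((r * Real.cos θ, r * Real.sin θ + t) : ℝ × ℝ)) 0 := by
        fun_prop
      have hnb : (D \ {0}) ∈ nhds ((r * Real.cos θ, r * Real.sin θ + (0:ℝ)) : ℝ × ℝ) := by
        rw [hpt_y]; exact hopen.mem_nhds hmem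
      filter_upwards [hco.preimage_mem_nhds hnb] with t ht
      exact (V13_eq ε hε u v hv _ ht).symm
    have hvy' : HasDerivAt (fun t : ℝ => V13 ε u (r * Real.cos θ, r * Real.sin θ + t))
        (fderiv ℝ v z (0,1)) 0 := hvy.congr_of_eventuallyEq hEqy
    have hy := hvy'.unique (V13_deriv_y ε hε u r θ hr0 _ (hud θ))
    rw [hx, hy]
    exact stmt13_aux (Real.cos θ) (Real.sin θ) ε
      (by linear_combination hcs) hεne (g θ) (b θ)
  -- now the integral computation
  rw [hderiv]
  set F : ℝ × ℝ → ℝ := fun z => ‖fderiv ℝ v z (1, 0)‖ ^ 2 + ‖fderiv ℝ v z (0, 1)‖ ^ 2 with hF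
  have hzero : volume ({(0 : ℝ × ℝ)} : Set (ℝ × ℝ)) = 0 := by
    rw [show ({0} : Set (ℝ × ℝ)) = ({0} : Set ℝ) ×ˢ ({0} : Set ℝ) from
      (Set.singleton_prod_singleton).symm, Measure.volume_eq_prod, Measure.prod_prod]
    simp
  have hae : (D \ {0} : Set (ℝ × ℝ)) =ᵐ[volume] D := by
    rw [diff_ae_eq_self]
    exact measure_mono_null inter_subset_right hzero
  have hstep1 : ∫ z in D, F z = ∫ z in D \ {0}, F z := (setIntegral_congr_set hae).symm
  have hmeas : MeasurableSet (D \ {0} : Set (ℝ × ℝ)) := hopen.measurableSet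
  have hstep2 : ∫ z in D \ {0}, F z = ∫ z, (D \ {0}).indicator F z :=
    (integral_indicator hmeas).symm
  have hstep3 : ∫ z, (D \ {0}).indicator F z
      = ∫ p in polarCoord.target, p.1 • (D \ {0}).indicator F (polarCoord.symm p) :=
    (integral_comp_polarCoord_symm _).symm
  have hstep4 : ∫ p in polarCoord.target, p.1 • (D \ {0}).indicator F (polarCoord.symm p)
      = ∫ p in polarCoord.target,
          (Ioo (0:ℝ) ε).indicator (fun r => r) p.1 * ((‖g p.2‖^2 + ‖b p.2‖^2) / ε^2) := by
    apply setIntegral_congr_fun (measurableSet_Ioi.prod measurableSet_Ioo)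
    rintro ⟨r, θ⟩ ⟨hr1, hθ⟩
    have hr0 : (0:ℝ) < r := hr1
    simp only [polarCoord_symm_apply]
    by_cases hrε : r < ε
    · have hzq : (r * Real.cos θ)^2 + (r * Real.sin θ)^2 = r^2 := by
        linear_combination r^2 * Real.sin_sq_add_cos_sq θ
      have hin : ((r * Real.cos θ, r * Real.sin θ) : ℝ × ℝ) ∈ D \ {0} := by
        constructor
        · show (r * Real.cos θ)^2 + (r * Real.sin θ)^2 < ε^2
          rw [hzq]
          nlinarith [hr0, hrε]
        · intro h0
          have h0' : ((r * Real.cos θ, r * Real.sin θ) : ℝ × ℝ) = 0 := h0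
          have e1 : r * Real.cos θ = 0 := congrArg Prod.fst h0'
          have e2 : r * Real.sin θ = 0 := congrArg Prod.snd h0'
          have h1 : r^2 = 0 := by rw [← hzq, e1, e2]; norm_num
          exact (pow_ne_zero 2 (ne_of_gt hr1)) h1
      rw [Set.indicator_of_mem hin F,
        Set.indicator_of_mem (show r ∈ Ioo (0:ℝ) ε from ⟨hr1, hrε⟩) (fun r : ℝ => r)]
      rw [show F (r * Real.cos θ, r * Real.sin θ) = (‖g θ‖^2 + ‖b θ‖^2) / ε^2 from
        key r ⟨hr1, hrε⟩ θ]
      rw [smul_eq_mul]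
    · have hzq : (r * Real.cos θ)^2 + (r * Real.sin θ)^2 = r^2 := by
        linear_combination r^2 * Real.sin_sq_add_cos_sq θ
      have hnot : ((r * Real.cos θ, r * Real.sin θ) : ℝ × ℝ) ∉ D \ {0} := by
        intro hmem2
        have h2 : (r * Real.cos θ)^2 + (r * Real.sin θ)^2 < ε^2 := hmem2.1
        rw [hzq] at h2
        nlinarith [not_lt.mp hrε, hε, h2]
      rw [Set.indicator_of_notMem hnot F,
        Set.indicator_of_notMem (show r ∉ Ioo (0:ℝ) ε from fun hm => hrε hm.2) (fun r : ℝ => r)]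
      simp
  have hstep5 : (∫ p in polarCoord.target,
        (Ioo (0:ℝ) ε).indicator (fun r => r) p.1 * ((‖g p.2‖^2 + ‖b p.2‖^2) / ε^2))
      = (∫ r in Ioi (0:ℝ), (Ioo (0:ℝ) ε).indicator (fun r => r) r)
        * ∫ θ in Ioo (-π) π, (‖g θ‖^2 + ‖b θ‖^2) / ε^2 := by
    rw [show polarCoord.target = Ioi (0:ℝ) ×ˢ Ioo (-π) π from rfl, Measure.volume_eq_prod]
    exact setIntegral_prod_mul (μ := (volume : Measure ℝ)) (ν := (volume : Measure ℝ))
      (fun r : ℝ => (Ioo (0:ℝ) ε).indicator (fun r => r) r)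
      (fun θ : ℝ => (‖g θ‖^2 + ‖b θ‖^2) / ε^2) (Ioi (0:ℝ)) (Ioo (-π) π)
  have hrad : ∫ r in Ioi (0:ℝ), (Ioo (0:ℝ) ε).indicator (fun r => r) r = ε^2/2 := by
    rw [setIntegral_indicator measurableSet_Ioo,
      show Ioi (0:ℝ) ∩ Ioo 0 ε = Ioo 0 ε from
        inter_eq_self_of_subset_right Ioo_subset_Ioi_self,
      ← integral_Ioc_eq_integral_Ioo, ← intervalIntegral.integral_of_le hε.le,
      integral_id]
    norm_num
  have hper : Function.Periodic (fun θ : ℝ => ‖g θ‖^2 + ‖b θ‖^2) (2*π) := by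
    intro θ
    have h1 : g (θ + 2*π) = g θ := by
      simp only [hgdef, Real.cos_add_two_pi, Real.sin_add_two_pi]
    have h2 : b (θ + 2*π) = b θ := by
      simp only [hbdef, Real.cos_add_two_pi, Real.sin_add_two_pi]
    simp only [h1, h2]
  have hang : ∫ θ in Ioo (-π) π, (‖g θ‖^2 + ‖b θ‖^2) / ε^2
      = (∫ θ in (0:ℝ)..(2*π), (‖g θ‖^2 + ‖b θ‖^2)) / ε^2 := by
    rw [integral_div]
    congr 1
    rw [← integral_Ioc_eq_integral_Ioo,
      ← intervalIntegral.integral_of_le (by linarith [Real.pi_pos] : -π ≤ π)]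
    have h := hper.intervalIntegral_add_eq (-π) 0
    rw [show -π + 2*π = π by ring, zero_add] at h
    exact h
  have hIg : IntervalIntegrable (fun θ : ℝ => ‖g θ‖^2) volume 0 (2*π) :=
    ((hgc.norm.pow 2)).intervalIntegrable 0 (2*π)
  have hIb : IntervalIntegrable (fun θ : ℝ => ‖b θ‖^2) volume 0 (2*π) :=
    ((hbc.norm.pow 2)).intervalIntegrable 0 (2*π)
  have hsplit : ∫ θ in (0:ℝ)..(2*π), (‖g θ‖^2 + ‖b θ‖^2)
      = (∫ θ in (0:ℝ)..(2*π), ‖g θ‖^2) + ∫ θ in (0:ℝ)..(2*π), ‖b θ‖^2 :=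
    intervalIntegral.integral_add hIg hIb
  have hA : (0:ℝ) ≤ ∫ φ in (0:ℝ)..(2*π), ‖g φ‖^2 :=
    intervalIntegral.integral_nonneg (by positivity) (fun x _ => by positivity)
  have hB : (0:ℝ) ≤ ∫ φ in (0:ℝ)..(2*π), ‖b φ‖^2 :=
    intervalIntegral.integral_nonneg (by positivity) (fun x _ => by positivity)
  have hLHS : ∫ z in D, F z = (ε^2/2) * (((∫ φ in (0:ℝ)..(2*π), ‖g φ‖^2)
      + ∫ φ in (0:ℝ)..(2*π), ‖b φ‖^2) / ε^2) := by
    rw [hstep1, hstep2, hstep3, hstep4, hstep5, hrad, hang, hsplit]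
  calc ∫ z in D, F z
      = (ε^2/2) * (((∫ φ in (0:ℝ)..(2*π), ‖g φ‖^2)
        + ∫ φ in (0:ℝ)..(2*π), ‖b φ‖^2) / ε^2) := hLHS
    _ = ((∫ φ in (0:ℝ)..(2*π), ‖g φ‖^2) + ∫ φ in (0:ℝ)..(2*π), ‖b φ‖^2) / 2 := by
        field_simp
    _ ≤ 4 * (∫ φ in (0:ℝ)..(2*π), ‖g φ‖^2) + 4 * ∫ φ in (0:ℝ)..(2*π), ‖b φ‖^2 := by
        linarith
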